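/- For every integer k ≥ 4 there exists a finite connected k-chordal simple graph G together with vertices x, y, u, v such that d(x,y) + d(u,v) ≥ max(d(x,u) + d(y,v), d(x,v) + d(y,u)) + ⌊k/2⌋. In particular, G is not (⌊(k−2)/2⌋/2)-hyperbolic, so the bound ⌊k/2⌋/2 of the main theorem is sharp for every k ≥ 4. -/

import Mathlib

/-- A graph is `k`-chordal if it has no induced cycle of length greater than `k`. -/
def IsKChordal {V : Type*} (G : SimpleGraph V) (k : ℕ) : Prop :=
  ∀ n : ℕ, 3 ≤ n → k < n → IsEmpty (SimpleGraph.cycleGraph n ↪g G)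

open SimpleGraph

/- Auxiliary: in `Fin n`, `(a - b).val = 1` means `a` is the cyclic successor of `b`. -/
private lemma sub_val_one {n : ℕ} {a b : Fin n} (h : (a - b).val = 1) :
    b.val + 1 = a.val ∨ (b.val = n - 1 ∧ a.val = 0) := by
  have ha := a.isLt; have hb := b.isLt
  rw [Fin.sub_def] at h
  simp only at h
  set s := n - b.val + a.val with hs
  have hlt : s < 2 * n := by omega
  rcases Nat.lt_or_ge s n with hc | hc
  · rw [Nat.mod_eq_of_lt hc] at h; omega
  · rw [Nat.mod_eq_sub_mod hc, Nat.mod_eq_of_lt (by omega)] at h; omega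

private lemma cycle_adj_val {n : ℕ} {a b : Fin n} (h : (cycleGraph n).Adj a b) :
    (a.val + 1 = b.val ∨ b.val + 1 = a.val) ∨
      (a.val = n - 1 ∧ b.val = 0) ∨ (b.val = n - 1 ∧ a.val = 0) := by
  rw [cycleGraph_adj'] at h
  rcases h with h | h
  · rcases sub_val_one h with h' | h' <;> tauto
  · rcases sub_val_one h with h' | h' <;> tauto

/-- The cycle graph on at least 5 vertices has no triangles. -/
private lemma cycle_no_triangle {n : ℕ} (hn : 5 ≤ n) {a b c : Fin n}
    (hab : (cycleGraph n).Adj a b) (hbc : (cycleGraph n).Adj b c)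
    (hac : (cycleGraph n).Adj a c) : False := by
  have h1 := cycle_adj_val hab
  have h2 := cycle_adj_val hbc
  have h3 := cycle_adj_val hac
  have hd1 : a.val ≠ b.val := fun h => hab.ne (Fin.ext h)
  have hd2 : b.val ≠ c.val := fun h => hbc.ne (Fin.ext h)
  have hd3 : a.val ≠ c.val := fun h => hac.ne (Fin.ext h)
  have := a.isLt; have := b.isLt; have := c.isLt
  omega

/-- The sharp example graph: a cycle of length `2m+2` with chords `(0,2)` and `(m+1,m+3)`. -/
def sharpG (m : ℕ) : SimpleGraph (Fin (2 * m + 2)) :=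
  SimpleGraph.fromRel (fun a b =>
    b.val = a.val + 1 ∨ (a.val = 0 ∧ b.val = 2 * m + 1) ∨
      (a.val = 0 ∧ b.val = 2) ∨ (a.val = m + 1 ∧ b.val = m + 3))

lemma sharpG_adj {m : ℕ} {a b : Fin (2 * m + 2)} :
    (sharpG m).Adj a b ↔ a.val ≠ b.val ∧
      ((b.val = a.val + 1 ∨ (a.val = 0 ∧ b.val = 2 * m + 1) ∨
          (a.val = 0 ∧ b.val = 2) ∨ (a.val = m + 1 ∧ b.val = m + 3)) ∨
        (a.val = b.val + 1 ∨ (b.val = 0 ∧ a.val = 2 * m + 1) ∨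
          (b.val = 0 ∧ a.val = 2) ∨ (b.val = m + 1 ∧ a.val = m + 3))) := by
  rw [sharpG, SimpleGraph.fromRel_adj]
  simp only [ne_eq, Fin.ext_iff]


lemma sharpG_adj_mk {m a b : ℕ} (ha : a < 2 * m + 2) (hb : b < 2 * m + 2)
    (h : (b = a + 1 ∨ (a = 0 ∧ b = 2 * m + 1) ∨ (a = 0 ∧ b = 2) ∨ (a = m + 1 ∧ b = m + 3)) ∨
      (a = b + 1 ∨ (b = 0 ∧ a = 2 * m + 1) ∨ (b = 0 ∧ a = 2) ∨ (b = m + 1 ∧ a = m + 3)))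
    (hne : a ≠ b) : (sharpG m).Adj ⟨a, ha⟩ ⟨b, hb⟩ := by
  rw [sharpG_adj]
  exact ⟨hne, h⟩

lemma sharpG_connected (m : ℕ) : (sharpG m).Connected := by
  rw [connected_iff]
  refine ⟨?_, ⟨⟨0, by omega⟩⟩⟩
  have H : ∀ (i : ℕ) (h : i < 2 * m + 2), (sharpG m).Reachable ⟨0, by omega⟩ ⟨i, h⟩ := by
    intro i
    induction i with
    | zero => intro h; rfl
    | succ j ih =>
      intro h
      have hadj : (sharpG m).Adj ⟨j, by omega⟩ ⟨j + 1, h⟩ := sharpG_adj_mk _ _ (by omega) (by omega)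
      exact (ih (by omega)).trans hadj.reachable
  intro a b
  exact (H a.val a.isLt).symm.trans (H b.val b.isLt) |>.trans (by rw [Fin.eta])
    |>.symm.trans (by rw [Fin.eta]) |>.symm

/-- Distance along consecutive vertices. -/
lemma sharpG_dist_forward (m : ℕ) :
    ∀ (l a b : ℕ) (hab : a + l = b) (hb : b < 2 * m + 2),
      (sharpG m).dist ⟨a, by omega⟩ ⟨b, hb⟩ ≤ l := by
  intro l
  induction l with
  | zero =>
    intro a b hab hb
    have : a = b := by omega
    subst this
    simp
  | succ j ih =>
    intro a b hab hb
    have ha1 : a + 1 < 2 * m + 2 := by omega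
    have hadj : (sharpG m).Adj ⟨a, by omega⟩ ⟨a + 1, ha1⟩ := sharpG_adj_mk _ _ (by omega) (by omega)
    calc (sharpG m).dist ⟨a, by omega⟩ ⟨b, hb⟩
        ≤ (sharpG m).dist ⟨a, by omega⟩ ⟨a + 1, ha1⟩ +
            (sharpG m).dist ⟨a + 1, ha1⟩ ⟨b, hb⟩ := (sharpG_connected m).dist_triangle
      _ ≤ 1 + j := by
          gcongr
          · exact (SimpleGraph.dist_le hadj.toWalk).trans (by simp)
          · exact ih (a + 1) b (by omega) hb
      _ = j + 1 := by omega

/-- Lower bounds on distance via 1-Lipschitz potentials. -/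
lemma dist_lower {V : Type*} {G : SimpleGraph V} (hc : G.Connected) (φ : V → ℕ)
    (h : ∀ a b, G.Adj a b → φ b ≤ φ a + 1) (x y : V) : φ y ≤ φ x + G.dist x y := by
  obtain ⟨p, hp⟩ := (hc x y).exists_walk_length_eq_dist
  rw [← hp]
  clear hp
  induction p with
  | nil => simp
  | cons hadj p ih =>
    have := h _ _ hadj
    simp only [Walk.length_cons]
    omega

/-- Potential centred at `x = m % 2`. -/
def phiX (m i : ℕ) : ℕ :=
  if i < m % 2 then 1
  else min (i - m % 2 - (if 2 ≤ i ∧ m % 2 = 0 then 1 else 0)) (2 * m + 2 - i + m % 2)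

/-- Potential centred at `u = (m+3)/2`. -/
def phiU (m i : ℕ) : ℕ :=
  if i < (m + 3) / 2 then (if i ≤ 1 then (m + 3) / 2 - 1 else (m + 3) / 2 - i)
  else min (i - (m + 3) / 2 - (if m + 3 ≤ i then 1 else 0)) ((m + 3) / 2 + (2 * m + 1 - i))

lemma phiX_lip (m : ℕ) (hm : 2 ≤ m) (a b : Fin (2 * m + 2)) (h : (sharpG m).Adj a b) :
    phiX m b.val ≤ phiX m a.val + 1 := by
  rw [sharpG_adj] at h
  have := a.isLt; have := b.isLt
  unfold phiX
  split_ifs <;> omega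

lemma phiU_lip (m : ℕ) (hm : 2 ≤ m) (a b : Fin (2 * m + 2)) (h : (sharpG m).Adj a b) :
    phiU m b.val ≤ phiU m a.val + 1 := by
  rw [sharpG_adj] at h
  have := a.isLt; have := b.isLt
  unfold phiU
  split_ifs <;> omega

/-- The sharp example graph is `2m`-chordal. -/
lemma sharpG_chordal (m : ℕ) (hm : 2 ≤ m) (n : ℕ) (h3 : 3 ≤ n) (hn : 2 * m < n) :
    IsEmpty (cycleGraph n ↪g sharpG m) := by
  constructor
  intro f
  have hn5 : 5 ≤ n := by omega
  -- if a triangle of `sharpG m` lies in the image of `f`, contradiction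
  have tri : ∀ t0 t1 t2 : Fin (2 * m + 2), (sharpG m).Adj t0 t1 → (sharpG m).Adj t1 t2 →
      (sharpG m).Adj t0 t2 → ∃ w, (w = t0 ∨ w = t1 ∨ w = t2) ∧ ∀ z, f z ≠ w := by
    intro t0 t1 t2 h01 h12 h02
    by_contra hcon
    push_neg at hcon
    obtain ⟨a, ha⟩ := hcon t0 (Or.inl rfl)
    obtain ⟨b, hb⟩ := hcon t1 (Or.inr (Or.inl rfl))
    obtain ⟨c, hc⟩ := hcon t2 (Or.inr (Or.inr rfl))
    have hab : (cycleGraph n).Adj a b := f.map_rel_iff.mp (by rw [ha, hb]; exact h01)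
    have hbc : (cycleGraph n).Adj b c := f.map_rel_iff.mp (by rw [hb, hc]; exact h12)
    have hac : (cycleGraph n).Adj a c := f.map_rel_iff.mp (by rw [ha, hc]; exact h02)
    exact cycle_no_triangle hn5 hab hbc hac
  -- the two triangles
  have adj1 : (sharpG m).Adj ⟨0, by omega⟩ ⟨1, by omega⟩ := sharpG_adj_mk _ _ (by omega) (by omega)
  have adj2 : (sharpG m).Adj ⟨1, by omega⟩ ⟨2, by omega⟩ := sharpG_adj_mk _ _ (by omega) (by omega)
  have adj3 : (sharpG m).Adj ⟨0, by omega⟩ ⟨2, by omega⟩ := sharpG_adj_mk _ _ (by omega) (by omega)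
  have adj4 : (sharpG m).Adj ⟨m + 1, by omega⟩ ⟨m + 2, by omega⟩ := sharpG_adj_mk _ _ (by omega) (by omega)
  have adj5 : (sharpG m).Adj ⟨m + 2, by omega⟩ ⟨m + 3, by omega⟩ := sharpG_adj_mk _ _ (by omega) (by omega)
  have adj6 : (sharpG m).Adj ⟨m + 1, by omega⟩ ⟨m + 3, by omega⟩ := sharpG_adj_mk _ _ (by omega) (by omega)
  obtain ⟨w1, hw1mem, hw1⟩ := tri _ _ _ adj1 adj2 adj3
  obtain ⟨w2, hw2mem, hw2⟩ := tri _ _ _ adj4 adj5 adj6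
  have hw1v : w1.val ≤ 2 := by
    rcases hw1mem with h | h | h <;> subst h <;> simp only [Fin.val_mk] <;> omega
  have hw2v : m + 1 ≤ w2.val := by
    rcases hw2mem with h | h | h <;> subst h <;> simp only [Fin.val_mk] <;> omega
  have hne : w2 ≠ w1 := by
    intro h
    rw [h] at hw2v
    omega
  -- cardinality contradiction
  have hcard1 : (Finset.univ.image f).card = n := by
    rw [Finset.card_image_of_injective _ f.injective, Finset.card_univ, Fintype.card_fin]
  have hsub : Finset.univ.image f ⊆ (Finset.univ.erase w1).erase w2 := by
    intro t ht
    simp only [Finset.mem_image, Finset.mem_univ, true_and] at ht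
    obtain ⟨z, rfl⟩ := ht
    refine Finset.mem_erase.mpr ⟨hw2 z, Finset.mem_erase.mpr ⟨hw1 z, Finset.mem_univ _⟩⟩
  have hcard2 := Finset.card_le_card hsub
  rw [hcard1, Finset.card_erase_of_mem (Finset.mem_erase.mpr ⟨hne, Finset.mem_univ _⟩),
    Finset.card_erase_of_mem (Finset.mem_univ _), Finset.card_univ, Fintype.card_fin] at hcard2
  omega

theorem chordal_hyperbolic_sharp (k : ℕ) (hk : 4 ≤ k) :
    ∃ (V : Type) (_ : Fintype V) (G : SimpleGraph V), G.Connected ∧ IsKChordal G k ∧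
      ∃ x y u v : V,
        max (G.dist x u + G.dist y v) (G.dist x v + G.dist y u) + k / 2 ≤
          G.dist x y + G.dist u v := by
  set m := k / 2 with hmdef
  have hm : 2 ≤ m := by omega
  have hk2 : 2 * m ≤ k := by omega
  refine ⟨Fin (2 * m + 2), inferInstance, sharpG m, sharpG_connected m, ?_, ?_⟩
  · intro n h3 hn
    exact sharpG_chordal m hm n h3 (by omega)
  · -- the quadruple
    have hxlt : m % 2 < 2 * m + 2 := by omega
    have hylt : m + 1 + m % 2 < 2 * m + 2 := by omega
    have hult : (m + 3) / 2 < 2 * m + 2 := by omega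
    have hvlt : (m + 3) / 2 + (m + 1) < 2 * m + 2 := by omega
    refine ⟨⟨m % 2, hxlt⟩, ⟨m + 1 + m % 2, hylt⟩, ⟨(m + 3) / 2, hult⟩,
      ⟨(m + 3) / 2 + (m + 1), hvlt⟩, ?_⟩
    have hc := sharpG_connected m
    -- lower bounds
    have lxy : m + m % 2 ≤ (sharpG m).dist ⟨m % 2, hxlt⟩ ⟨m + 1 + m % 2, hylt⟩ := by
      have H := dist_lower hc (fun i => phiX m i.val) (phiX_lip m hm)
        ⟨m % 2, hxlt⟩ ⟨m + 1 + m % 2, hylt⟩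
      simp only [Fin.val_mk] at H
      have h1 : phiX m (m % 2) = 0 := by unfold phiX; split_ifs <;> omega
      have h2 : phiX m (m + 1 + m % 2) = m + m % 2 := by unfold phiX; split_ifs <;> omega
      omega
    have luv : m ≤ (sharpG m).dist ⟨(m + 3) / 2, hult⟩ ⟨(m + 3) / 2 + (m + 1), hvlt⟩ := by
      have H := dist_lower hc (fun i => phiU m i.val) (phiU_lip m hm)
        ⟨(m + 3) / 2, hult⟩ ⟨(m + 3) / 2 + (m + 1), hvlt⟩
      simp only [Fin.val_mk] at H
      have h1 : phiU m ((m + 3) / 2) = 0 := by unfold phiU; split_ifs <;> omega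
      have h2 : phiU m ((m + 3) / 2 + (m + 1)) = m := by unfold phiU; split_ifs <;> omega
      omega
    -- upper bounds
    have h2lt : (2 : ℕ) < 2 * m + 2 := by omega
    have hx2 : (sharpG m).Adj ⟨m % 2, hxlt⟩ ⟨2, h2lt⟩ := sharpG_adj_mk _ _ (by omega) (by omega)
    have hxu : (sharpG m).dist ⟨m % 2, hxlt⟩ ⟨(m + 3) / 2, hult⟩ ≤ (m + m % 2) / 2 := by
      have h1 : (sharpG m).dist ⟨m % 2, hxlt⟩ ⟨2, h2lt⟩ ≤ 1 :=
        (SimpleGraph.dist_le hx2.toWalk).trans (by simp)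
      have h2 : (sharpG m).dist ⟨2, h2lt⟩ ⟨(m + 3) / 2, hult⟩ ≤ (m + 3) / 2 - 2 :=
        sharpG_dist_forward m ((m + 3) / 2 - 2) 2 ((m + 3) / 2) (by omega) hult
      have := hc.dist_triangle (u := (⟨m % 2, hxlt⟩ : Fin (2 * m + 2))) (v := ⟨2, h2lt⟩)
        (w := ⟨(m + 3) / 2, hult⟩)
      omega
    have hm3lt : m + 3 < 2 * m + 2 := by omega
    have hym3 : (sharpG m).Adj ⟨m + 1 + m % 2, hylt⟩ ⟨m + 3, hm3lt⟩ := sharpG_adj_mk _ _ (by omega) (by omega)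
    have hyv : (sharpG m).dist ⟨m + 1 + m % 2, hylt⟩ ⟨(m + 3) / 2 + (m + 1), hvlt⟩ ≤
        (m + m % 2) / 2 := by
      have h1 : (sharpG m).dist ⟨m + 1 + m % 2, hylt⟩ ⟨m + 3, hm3lt⟩ ≤ 1 :=
        (SimpleGraph.dist_le hym3.toWalk).trans (by simp)
      have h2 : (sharpG m).dist ⟨m + 3, hm3lt⟩ ⟨(m + 3) / 2 + (m + 1), hvlt⟩ ≤
          (m + 3) / 2 + (m + 1) - (m + 3) :=
        sharpG_dist_forward m ((m + 3) / 2 + (m + 1) - (m + 3)) (m + 3)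
          ((m + 3) / 2 + (m + 1)) (by omega) hvlt
      have := hc.dist_triangle (u := (⟨m + 1 + m % 2, hylt⟩ : Fin (2 * m + 2)))
        (v := ⟨m + 3, hm3lt⟩) (w := ⟨(m + 3) / 2 + (m + 1), hvlt⟩)
      omega
    have hyu : (sharpG m).dist ⟨m + 1 + m % 2, hylt⟩ ⟨(m + 3) / 2, hult⟩ ≤
        (m + m % 2) / 2 := by
      have h1 : (sharpG m).dist ⟨(m + 3) / 2, hult⟩ ⟨m + 1 + m % 2, hylt⟩ ≤
          (m + 1 + m % 2) - (m + 3) / 2 :=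
        sharpG_dist_forward m ((m + 1 + m % 2) - (m + 3) / 2) ((m + 3) / 2)
          (m + 1 + m % 2) (by omega) hylt
      rw [SimpleGraph.dist_comm] at h1
      omega
    have h0lt : (0 : ℕ) < 2 * m + 2 := by omega
    have hlastlt : 2 * m + 1 < 2 * m + 2 := by omega
    have h0last : (sharpG m).Adj ⟨0, h0lt⟩ ⟨2 * m + 1, hlastlt⟩ := sharpG_adj_mk _ _ (by omega) (by omega)
    have hxv : (sharpG m).dist ⟨m % 2, hxlt⟩ ⟨(m + 3) / 2 + (m + 1), hvlt⟩ ≤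
        (m + m % 2) / 2 := by
      have h1 : (sharpG m).dist ⟨0, h0lt⟩ ⟨m % 2, hxlt⟩ ≤ m % 2 :=
        sharpG_dist_forward m (m % 2) 0 (m % 2) (by omega) hxlt
      rw [SimpleGraph.dist_comm] at h1
      have h2 : (sharpG m).dist ⟨0, h0lt⟩ ⟨2 * m + 1, hlastlt⟩ ≤ 1 :=
        (SimpleGraph.dist_le h0last.toWalk).trans (le_of_eq rfl)
      have h3 : (sharpG m).dist ⟨(m + 3) / 2 + (m + 1), hvlt⟩ ⟨2 * m + 1, hlastlt⟩ ≤
          (2 * m + 1) - ((m + 3) / 2 + (m + 1)) :=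
        sharpG_dist_forward m ((2 * m + 1) - ((m + 3) / 2 + (m + 1)))
          ((m + 3) / 2 + (m + 1)) (2 * m + 1) (by omega) hlastlt
      rw [SimpleGraph.dist_comm] at h3
      have t1 := hc.dist_triangle (u := (⟨m % 2, hxlt⟩ : Fin (2 * m + 2))) (v := ⟨0, h0lt⟩)
        (w := ⟨(m + 3) / 2 + (m + 1), hvlt⟩)
      have t2 := hc.dist_triangle (u := (⟨0, h0lt⟩ : Fin (2 * m + 2)))
        (v := ⟨2 * m + 1, hlastlt⟩) (w := ⟨(m + 3) / 2 + (m + 1), hvlt⟩)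
      omega
    omega
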